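/- Let τ_O be the coupling time of the oracle-skipping bounding chain (where each letter is drawn from D conditioned on being active for the current bounding set) and τ_I the coupling time of the incremental-skipping bounding chain (where after each passive letter that letter is removed from the support of D until the next active letter is read). Then τ_O ≤ τ_I ≤ M · τ_O, where M = |A| is the size of the alphabet, under the natural coupling in which both chains are obtained from a common i.i.d. sequence by removing passive letters. -/

import Mathlib

/-- Bounding set reached after reading the first `j` letters of the sequence `v`. -/
def boundAt {S A : Type} (op : Set S → A → Set S) (v : ℕ → A) (j : ℕ) : Set S :=
  (List.ofFn fun k : Fin j => v (k : ℕ)).foldl op Set.univ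

/-- The letter `v j` is active at position `j` (it changes the bounding set). -/
def ActiveAt {S A : Type} (op : Set S → A → Set S) (v : ℕ → A) (j : ℕ) : Prop :=
  op (boundAt op v j) (v j) ≠ boundAt op v j

lemma boundAt_succ {S A : Type} (op : Set S → A → Set S) (v : ℕ → A) (j : ℕ) :
    boundAt op v (j + 1) = op (boundAt op v j) (v j) := by
  unfold boundAt
  rw [List.ofFn_succ']
  simp [List.foldl_concat]

lemma boundAt_passive {S A : Type} (op : Set S → A → Set S) (v : ℕ → A) (j : ℕ)
    (h : ¬ ActiveAt op v j) : boundAt op v (j + 1) = boundAt op v j := by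
  simp only [ActiveAt, not_not] at h
  rw [boundAt_succ]; exact h

lemma boundAt_const {S A : Type} (op : Set S → A → Set S) (v : ℕ → A) (s p : ℕ)
    (hp : ∀ l, s ≤ l → l < p → ¬ ActiveAt op v l) :
    ∀ l, s ≤ l → l ≤ p → boundAt op v l = boundAt op v s := by
  intro l
  induction l with
  | zero => intro h _; have : s = 0 := Nat.le_zero.mp h; rw [this]
  | succ l ih =>
    intro h1 h2
    rcases Nat.lt_or_ge l s with hl | hl
    · have : s = l + 1 := by omega
      rw [this]
    · rw [boundAt_passive op v l (hp l hl (by omega)), ih hl (by omega)]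

lemma gap_bound {S A : Type} [Fintype A] (op : Set S → A → Set S) (v : ℕ → A) (s p : ℕ)
    (hsp : s ≤ p)
    (hp : ∀ l, s ≤ l → l < p → ¬ ActiveAt op v l)
    (hap : ActiveAt op v p)
    (hdist : ∀ j k, j < k →
      (∀ l, j ≤ l → l ≤ k → ¬ ActiveAt op v l) → v j ≠ v k) :
    p + 1 ≤ s + Fintype.card A := by
  have hconst := boundAt_const op v s p hp
  have key : ∀ j k, j ∈ Finset.Icc s p → k ∈ Finset.Icc s p → j < k → v j ≠ v k := by
    intro j k hj hk hjk
    simp only [Finset.mem_Icc] at hj hk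
    rcases Nat.lt_or_ge k p with hkp | hkp
    · exact hdist j k hjk (fun l hl1 hl2 => hp l (le_trans hj.1 hl1) (by omega))
    · have hkeq : k = p := le_antisymm hk.2 hkp
      rw [hkeq]
      have hjpass : ¬ ActiveAt op v j := hp j hj.1 (by omega)
      simp only [ActiveAt, not_not] at hjpass
      have hbj : boundAt op v j = boundAt op v s := hconst j hj.1 hj.2
      have hbp : boundAt op v p = boundAt op v s := hconst p hsp le_rfl
      intro hvv
      apply hap
      rw [hbp, ← hvv, ← hbj]
      exact hjpass
  have hinj : Set.InjOn v (Finset.Icc s p) := by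
    intro j hj k hk hvv
    by_contra hne
    rcases Nat.lt_or_ge j k with h | h
    · exact key j k hj hk h hvv
    · exact key k j hk hj (by omega) hvv.symm
  have := Finset.card_le_card_of_injOn v (fun a _ => Finset.mem_univ (v a)) hinj
  rw [Nat.card_Icc] at this
  simp only [Finset.card_univ] at this
  omega

/-- under the natural coupling in which the oracle-skipping sequence `vO`
is the subsequence of the incremental-skipping sequence `vI` consisting of exactly its
active letters (via the strictly monotone index map `φ`), and in which between two
consecutive active letters of `vI` the passive letters are pairwise distinct, the
coupling times satisfy `τ_O ≤ τ_I ≤ M · τ_O` where `M = |A|`. -/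
theorem stmt4 {S A : Type} [Fintype A]
    (op : Set S → A → Set S)
    (vI vO : ℕ → A) (φ : ℕ → ℕ) (hφ : StrictMono φ)
    (hsub : ∀ i, vO i = vI (φ i))
    (hact : ∀ j, j ∈ Set.range φ ↔ ActiveAt op vI j)
    (hdist : ∀ j k, j < k →
      (∀ l, j ≤ l → l ≤ k → ¬ ActiveAt op vI l) → vI j ≠ vI k)
    (hI : ∃ i, (boundAt op vI i).Subsingleton) :
    {i | (boundAt op vO i).Subsingleton}.Nonempty ∧
    sInf {i | (boundAt op vO i).Subsingleton}
      ≤ sInf {i | (boundAt op vI i).Subsingleton} ∧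
    sInf {i | (boundAt op vI i).Subsingleton}
      ≤ Fintype.card A * sInf {i | (boundAt op vO i).Subsingleton} := by
  classical
  set M := Fintype.card A with hM
  set c : ℕ → ℕ := fun j => ((Finset.range j).filter (fun k => ActiveAt op vI k)).card with hc
  -- counting lemmas
  have hcφ : ∀ m, c (φ m) = m := by
    intro m
    have heq : (Finset.range (φ m)).filter (fun k => ActiveAt op vI k)
        = (Finset.range m).image φ := by
      ext j
      simp only [Finset.mem_filter, Finset.mem_range, Finset.mem_image]
      constructor
      · rintro ⟨hj, ha⟩
        obtain ⟨k, hk⟩ := (hact j).mpr ha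
        exact ⟨k, by rw [← hk] at hj; exact hφ.lt_iff_lt.mp hj, hk⟩
      · rintro ⟨k, hk, rfl⟩
        exact ⟨hφ hk, (hact (φ k)).mp ⟨k, rfl⟩⟩
    simp only [hc]
    rw [heq, Finset.card_image_of_injective _ hφ.injective, Finset.card_range]
  have hcs : ∀ j, ActiveAt op vI j → c (j + 1) = c j + 1 := by
    intro j hj
    simp only [hc, Finset.range_add_one, Finset.filter_insert, if_pos hj]
    rw [Finset.card_insert_of_notMem]
    simp
  have hcp : ∀ j, ¬ ActiveAt op vI j → c (j + 1) = c j := by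
    intro j hj
    simp only [hc, Finset.range_add_one, Finset.filter_insert, if_neg hj]
  have hcle : ∀ j, c j ≤ j := by
    intro j
    calc c j ≤ (Finset.range j).card := Finset.card_filter_le _ _
    _ = j := Finset.card_range j
  -- the coupling identity
  have hP : ∀ j, boundAt op vI j = boundAt op vO (c j) := by
    intro j
    induction j with
    | zero =>
      have hc0 : c 0 = 0 := by simp [hc]
      rw [hc0]; simp [boundAt]
    | succ j ih =>
      by_cases ha : ActiveAt op vI j
      · obtain ⟨m, rfl⟩ := (hact j).mpr ha
        rw [boundAt_succ, hcs _ ha, hcφ, boundAt_succ, ← hsub m, ih, hcφ]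
      · rw [boundAt_passive op vI j ha, hcp _ ha, ih]
  -- gap bounds on φ
  have hφb : ∀ m, φ m + 1 ≤ M * (m + 1) := by
    intro m
    induction m with
    | zero =>
      have h0 := gap_bound op vI 0 (φ 0) (Nat.zero_le _)
        (fun l _ hl ha => by
          obtain ⟨k, hk⟩ := (hact l).mpr ha
          have : φ 0 ≤ φ k := hφ.monotone (Nat.zero_le k)
          omega)
        ((hact (φ 0)).mp ⟨0, rfl⟩) hdist
      simpa using h0
    | succ m ih =>
      have h1 := gap_bound op vI (φ m + 1) (φ (m + 1)) (hφ (Nat.lt_succ_self m))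
        (fun l hl1 hl2 ha => by
          obtain ⟨k, hk⟩ := (hact l).mpr ha
          rw [← hk] at hl1 hl2
          have hmk : m < k := hφ.lt_iff_lt.mp (by omega)
          have : φ (m + 1) ≤ φ k := hφ.monotone hmk
          omega)
        ((hact (φ (m + 1))).mp ⟨m + 1, rfl⟩) hdist
      have : M * (m + 1) + M = M * (m + 1 + 1) := by ring
      omega
  -- assemble
  have hSI : {i | (boundAt op vI i).Subsingleton}.Nonempty := hI
  have hnI : (boundAt op vI (sInf {i | (boundAt op vI i).Subsingleton})).Subsingleton :=
    Nat.sInf_mem hSI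
  set nI := sInf {i | (boundAt op vI i).Subsingleton} with hnIdef
  have h1 : (boundAt op vO (c nI)).Subsingleton := by rw [← hP]; exact hnI
  have hSO : {i | (boundAt op vO i).Subsingleton}.Nonempty := ⟨c nI, h1⟩
  refine ⟨hSO, le_trans (Nat.sInf_le h1) (hcle nI), ?_⟩
  set nO := sInf {i | (boundAt op vO i).Subsingleton} with hnOdef
  have hnO : (boundAt op vO nO).Subsingleton := Nat.sInf_mem hSO
  rcases Nat.eq_zero_or_eq_succ_pred nO with h0 | hsucc
  · have : (boundAt op vI 0).Subsingleton := by
      rw [hP 0]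
      have : c 0 = 0 := by simp [hc]
      rw [this, ← h0]
      exact hnO
    have := Nat.sInf_le (show (0:ℕ) ∈ {i | (boundAt op vI i).Subsingleton} from this)
    omega
  · set m := nO - 1 with hm
    have hnOm : nO = m + 1 := hsucc
    have hmem : (boundAt op vI (φ m + 1)).Subsingleton := by
      rw [hP, hcs _ ((hact (φ m)).mp ⟨m, rfl⟩), hcφ, ← hnOm]
      exact hnO
    have hle := Nat.sInf_le
      (show φ m + 1 ∈ {i | (boundAt op vI i).Subsingleton} from hmem)
    have := hφb m
    calc sInf {i | (boundAt op vI i).Subsingleton} ≤ φ m + 1 := hle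
    _ ≤ M * (m + 1) := hφb m
    _ = M * nO := by rw [hnOm]
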